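/- Let n ≥ 1 and let w : P(N) → ℝ be any real vector indexed by subsets of N = {1,...,n}. Then the moment matrix M_{n−1}(w) is congruent to the matrix D + w_N^N · v vᵀ, where D is the diagonal matrix indexed by P_{n−1}(N) with (I,I)-entry w_I^N, and v is the vector indexed by P_{n−1}(N) with entries v_I = (−1)^{n+1−|I|}. In particular, M_{n−1}(w) is positive semidefinite if and only if D + w_N^N · v vᵀ is positive semidefinite. -/

import Mathlib

open Finset Matrix

/-- `w_I^N := ∑_{H ⊆ N \ I} (-1)^{|H|} w_{H ∪ I}`. -/
def mob {n : ℕ} (w : Finset (Fin n) → ℝ) (I : Finset (Fin n)) : ℝ :=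
  ∑ H ∈ (Finset.univ \ I).powerset, (-1 : ℝ) ^ H.card * w (H ∪ I)

/-- The index set `P_{n-1}(N)`: all subsets of `N = {1,...,n}` except `N` itself. -/
abbrev Idx (n : ℕ) := {I : Finset (Fin n) // I ≠ Finset.univ}

/-- The `(n-1)`-moment matrix of `w`, with `(I,J)`-entry `w_{I ∪ J}`. -/
def Mnm1 {n : ℕ} (w : Finset (Fin n) → ℝ) : Matrix (Idx n) (Idx n) ℝ :=
  Matrix.of fun I J => w (I.1 ∪ J.1)

section Helpers

variable {α : Type*} [DecidableEq α]

lemma neg_one_pow_sub (a b : ℕ) (h : b ≤ a) : (-1:ℝ)^(a-b) = (-1)^a * (-1)^b := by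
  have : (-1:ℝ)^(a-b) * ((-1)^b * (-1)^b) = (-1)^a * (-1)^b := by
    rw [← mul_assoc, ← pow_add, Nat.sub_add_cancel h]
  simpa [← pow_add, ← two_mul] using this

lemma sum_pow_neg_one (E : Finset α) :
    ∑ H ∈ E.powerset, (-1:ℝ)^H.card = if E = ∅ then 1 else 0 := by
  have := Finset.sum_powerset_neg_one_pow_card (x := E)
  have := congrArg (fun z : ℤ => (z : ℝ)) this
  push_cast at this
  simpa using this

/-- reindex sums over an inclusion interval. -/
lemma sum_interval (S T : Finset α) [Fintype α] (hST : S ⊆ T) (f : Finset α → ℝ) :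
    ∑ L ∈ Finset.univ.filter (fun L => S ⊆ L ∧ L ⊆ T), f L
      = ∑ H ∈ (T \ S).powerset, f (H ∪ S) := by
  refine Finset.sum_nbij' (fun L => L \ S) (fun H => H ∪ S) ?_ ?_ ?_ ?_ ?_
  · intro L hL
    simp only [mem_filter, mem_univ, true_and] at hL
    exact mem_powerset.2 (sdiff_subset_sdiff hL.2 le_rfl)
  · intro H hH
    simp only [mem_powerset] at hH
    simp only [mem_filter, mem_univ, true_and]
    exact ⟨subset_union_right, union_subset ((hH.trans sdiff_subset)) hST⟩
  · intro L hL
    simp only [mem_filter, mem_univ, true_and] at hL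
    exact sdiff_union_of_subset hL.1
  · intro H hH
    simp only [mem_powerset] at hH
    have : Disjoint H S := disjoint_of_subset_left hH sdiff_disjoint
    rw [union_sdiff_right, sdiff_eq_self_of_disjoint this]
  · intro L hL
    simp only [mem_filter, mem_univ, true_and] at hL
    rw [sdiff_union_of_subset hL.1]

/-- reindex pairs (K, H) with K ⊆ A, H ⊆ A \ K, to (T, K) with K ⊆ T ⊆ A. -/
lemma sum_pairs (A : Finset α) (g : Finset α → Finset α → ℝ) :
    ∑ K ∈ A.powerset, ∑ H ∈ (A \ K).powerset, g K H
      = ∑ T ∈ A.powerset, ∑ K ∈ T.powerset, g K (T \ K) := by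
  rw [Finset.sum_sigma', Finset.sum_sigma']
  refine Finset.sum_nbij' (fun p => ⟨p.1 ∪ p.2, p.1⟩) (fun p => ⟨p.2, p.1 \ p.2⟩) ?_ ?_ ?_ ?_ ?_
  · rintro ⟨K, H⟩ hp
    simp only [mem_sigma, mem_powerset] at hp ⊢
    exact ⟨union_subset hp.1 (hp.2.trans sdiff_subset), subset_union_left⟩
  · rintro ⟨T, K⟩ hp
    simp only [mem_sigma, mem_powerset] at hp ⊢
    exact ⟨hp.2.trans hp.1, sdiff_subset_sdiff hp.1 le_rfl⟩
  · rintro ⟨K, H⟩ hp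
    simp only [mem_sigma, mem_powerset] at hp
    have hd : Disjoint H K := disjoint_of_subset_left hp.2 sdiff_disjoint
    simp [union_sdiff_left, sdiff_eq_self_of_disjoint hd]
  · rintro ⟨T, K⟩ hp
    simp only [mem_sigma, mem_powerset] at hp
    simp [union_sdiff_of_subset hp.2]
  · rintro ⟨K, H⟩ hp
    simp only [mem_sigma, mem_powerset] at hp
    have hd : Disjoint H K := disjoint_of_subset_left hp.2 sdiff_disjoint
    simp only []
    rw [union_sdiff_left, sdiff_eq_self_of_disjoint hd]

lemma sum_sdiff_pow (T : Finset α) :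
    ∑ K ∈ T.powerset, (-1:ℝ)^(T \ K).card = if T = ∅ then 1 else 0 := by
  rw [← sum_pow_neg_one T]
  refine Finset.sum_nbij' (fun K => T \ K) (fun K => T \ K) ?_ ?_ ?_ ?_ ?_ <;>
    intro K hK <;> simp only [mem_powerset] at hK ⊢
  · exact sdiff_subset
  · exact sdiff_subset
  · exact Finset.sdiff_sdiff_eq_self hK
  · exact Finset.sdiff_sdiff_eq_self hK

lemma mobius_inv (A : Finset α) (f : Finset α → ℝ) :
    ∑ K ∈ A.powerset, ∑ H ∈ (A \ K).powerset, (-1:ℝ)^H.card * f (H ∪ K) = f ∅ := by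
  rw [sum_pairs]
  have h2 : ∀ T ∈ A.powerset, ∑ K ∈ T.powerset, (-1:ℝ)^(T \ K).card * f ((T \ K) ∪ K)
      = (if T = ∅ then 1 else 0) * f T := by
    intro T _
    have h1 : ∀ K ∈ T.powerset, (-1:ℝ)^(T \ K).card * f ((T \ K) ∪ K)
        = (-1:ℝ)^(T \ K).card * f T := by
      intro K hK; rw [sdiff_union_of_subset (mem_powerset.1 hK)]
    rw [Finset.sum_congr rfl h1, ← Finset.sum_mul, sum_sdiff_pow]
  rw [Finset.sum_congr rfl h2]
  simp [ite_mul, Finset.sum_ite_eq']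


lemma lemA {n : ℕ} (w : Finset (Fin n) → ℝ) (S : Finset (Fin n)) :
    ∑ K ∈ Finset.univ.filter (fun K => S ⊆ K), mob w K = w S := by
  have h0 : (Finset.univ.filter (fun K => S ⊆ K) : Finset (Finset (Fin n)))
      = Finset.univ.filter (fun K => S ⊆ K ∧ K ⊆ Finset.univ) := by simp
  rw [h0, sum_interval S Finset.univ (subset_univ S) (mob w)]
  have key := mobius_inv (Finset.univ \ S) (fun T => w (T ∪ S))
  rw [show w S = w (∅ ∪ S) by rw [empty_union], ← key]
  refine Finset.sum_congr rfl fun H hH => ?_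
  unfold mob
  have hu : Finset.univ \ (H ∪ S) = (Finset.univ \ S) \ H := by
    ext x; simp; tauto
  rw [hu]
  refine Finset.sum_congr rfl fun G hG => ?_
  rw [← union_assoc]

lemma lemB {n : ℕ} (I : Finset (Fin n)) (hI : I ≠ Finset.univ) :
    ∑ K ∈ Finset.univ.filter (fun K => I ⊆ K), (-1:ℝ)^(n+1-K.card) = 0 := by
  have h0 : (Finset.univ.filter (fun K => I ⊆ K) : Finset (Finset (Fin n)))
      = Finset.univ.filter (fun K => I ⊆ K ∧ K ⊆ Finset.univ) := by simp
  rw [h0, sum_interval I Finset.univ (subset_univ I)]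
  have hIc : I.card ≤ n := by simpa using Finset.card_le_card (subset_univ I)
  have hterm : ∀ H ∈ (Finset.univ \ I).powerset,
      (-1:ℝ)^(n+1-(H ∪ I).card) = (-1:ℝ)^(n+1-I.card) * (-1:ℝ)^H.card := by
    intro H hH
    rw [mem_powerset] at hH
    have hd : Disjoint H I := disjoint_of_subset_left hH sdiff_disjoint
    have hc : (H ∪ I).card = H.card + I.card := card_union_of_disjoint hd
    have hHc : H.card ≤ n - I.card := by
      have := Finset.card_le_card hH
      simpa [Finset.card_sdiff_of_subset (subset_univ I)] using this
    have he : n+1-(H ∪ I).card = (n+1-I.card) - H.card := by omega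
    rw [he, neg_one_pow_sub _ _ (by omega)]
  rw [Finset.sum_congr rfl hterm, ← Finset.mul_sum, sum_pow_neg_one]
  have : (Finset.univ \ I : Finset (Fin n)) ≠ ∅ := by
    intro h
    exact hI (univ_subset_iff.1 (sdiff_eq_empty_iff_subset.1 h)).symm.symm
  simp [this]

lemma lemDelta {n : ℕ} (I K : Finset (Fin n)) :
    ∑ L ∈ Finset.univ.filter (fun L => I ⊆ L ∧ L ⊆ K), (-1:ℝ)^(L.card - I.card)
      = if I = K then 1 else 0 := by
  by_cases hIK : I ⊆ K
  · rw [sum_interval I K hIK]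
    have hterm : ∀ H ∈ (K \ I).powerset,
        (-1:ℝ)^((H ∪ I).card - I.card) = (-1:ℝ)^H.card := by
      intro H hH
      rw [mem_powerset] at hH
      have hd : Disjoint H I := disjoint_of_subset_left hH sdiff_disjoint
      rw [card_union_of_disjoint hd, Nat.add_sub_cancel]
    rw [Finset.sum_congr rfl hterm, sum_pow_neg_one]
    congr 1
    rw [sdiff_eq_empty_iff_subset]
    apply propext
    exact ⟨fun h => Finset.Subset.antisymm hIK h, fun h => h ▸ subset_rfl⟩
  · rw [Finset.sum_eq_zero, if_neg (fun h : I = K => hIK (h ▸ subset_rfl))]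
    intro L hL
    simp only [mem_filter] at hL
    exact absurd (hL.2.1.trans hL.2.2) hIK


end Helpers

/-- `M_{n-1}(w)` is congruent to `D + w_N^N · v vᵀ` where `D` is the diagonal matrix of the
values `w_I^N` and `v_I = (-1)^{n+1-|I|}`; in particular one is PSD iff the other is. -/
theorem moment_congruent_almost_diagonal (n : ℕ) (hn : 1 ≤ n)
    (w : Finset (Fin n) → ℝ)
    (v : Idx n → ℝ) (hv : ∀ I : Idx n, v I = (-1 : ℝ) ^ (n + 1 - I.1.card))
    (A : Matrix (Idx n) (Idx n) ℝ)
    (hA : A = Matrix.diagonal (fun I : Idx n => mob w I.1)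
        + mob w Finset.univ • Matrix.vecMulVec v v) :
    (∃ P : Matrix (Idx n) (Idx n) ℝ, IsUnit P ∧ Mnm1 w = Pᵀ * A * P) ∧
      ((Mnm1 w).PosSemidef ↔ A.PosSemidef) := by
  classical
  set s0 : Finset (Finset (Fin n)) := Finset.univ.erase Finset.univ with hs0
  have hsub : ∀ f : Finset (Fin n) → ℝ,
      ∑ K ∈ s0, f K = ∑ K : Idx n, f K.1 := by
    intro f
    exact Finset.sum_subtype s0 (by intro x; simp [hs0]) f
  have hadd : ∀ f : Finset (Fin n) → ℝ,
      f Finset.univ + ∑ K ∈ s0, f K = ∑ K ∈ Finset.univ, f K := by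
    intro f
    exact Finset.add_sum_erase Finset.univ f (Finset.mem_univ Finset.univ)
  have hcardu : (Finset.univ : Finset (Fin n)).card = n := by simp
  -- fact1
  have fact1 : ∀ I : Idx n,
      ∑ K : Idx n, (if I.1 ⊆ K.1 then (1:ℝ) else 0) * v K = 1 := by
    intro I
    have e1 : ∑ K : Idx n, (if I.1 ⊆ K.1 then (1:ℝ) else 0) * v K
        = ∑ K ∈ s0, (if I.1 ⊆ K then (-1:ℝ)^(n+1-K.card) else 0) := by
      rw [hsub]
      refine Finset.sum_congr rfl fun K _ => ?_
      rw [hv K]; split_ifs <;> ring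
    have e2 : ∑ K ∈ Finset.univ, (if I.1 ⊆ K then (-1:ℝ)^(n+1-K.card) else 0) = 0 := by
      rw [← Finset.sum_filter]
      exact lemB I.1 I.2
    have e3 := hadd (fun K => (if I.1 ⊆ K then (-1:ℝ)^(n+1-K.card) else 0))
    rw [e2] at e3
    have e4 : (if I.1 ⊆ (Finset.univ : Finset (Fin n)) then (-1:ℝ)^(n+1-(Finset.univ : Finset (Fin n)).card) else 0) = -1 := by
      rw [if_pos (subset_univ _), hcardu]
      norm_num
    rw [e1]
    simp only [e4] at e3
    linarith
  -- fact2
  have fact2 : ∀ I J : Idx n,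
      ∑ L : Idx n, (if I.1 ⊆ L.1 then (1:ℝ) else 0) * (if J.1 ⊆ L.1 then (1:ℝ) else 0)
          * mob w L.1 = w (I.1 ∪ J.1) - mob w Finset.univ := by
    intro I J
    have e1 : ∑ L : Idx n, (if I.1 ⊆ L.1 then (1:ℝ) else 0) * (if J.1 ⊆ L.1 then (1:ℝ) else 0) * mob w L.1
        = ∑ L ∈ s0, (if I.1 ∪ J.1 ⊆ L then mob w L else 0) := by
      rw [hsub]
      refine Finset.sum_congr rfl fun L _ => ?_
      by_cases h1 : I.1 ⊆ L.1 <;> by_cases h2 : J.1 ⊆ L.1 <;>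
        simp [h1, h2, union_subset_iff]
    have e2 : ∑ L ∈ Finset.univ, (if I.1 ∪ J.1 ⊆ L then mob w L else 0) = w (I.1 ∪ J.1) := by
      rw [← Finset.sum_filter]
      exact lemA w _
    have e3 := hadd (fun L => (if I.1 ∪ J.1 ⊆ L then mob w L else 0))
    rw [e2, if_pos (subset_univ _)] at e3
    rw [e1]; linarith
  -- the matrices
  set P : Matrix (Idx n) (Idx n) ℝ :=
    Matrix.of (fun K I : Idx n => if I.1 ⊆ K.1 then (1:ℝ) else 0) with hP
  set Q : Matrix (Idx n) (Idx n) ℝ :=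
    Matrix.of (fun L I : Idx n => if I.1 ⊆ L.1 then (-1:ℝ)^(L.1.card - I.1.card) else 0) with hQ
  have factQ : P * Q = 1 := by
    ext K I
    rw [Matrix.mul_apply, Matrix.one_apply]
    have e1 : ∑ L : Idx n, P K L * Q L I
        = ∑ L ∈ s0, (if I.1 ⊆ L ∧ L ⊆ K.1 then (-1:ℝ)^(L.card - I.1.card) else 0) := by
      rw [hsub]
      refine Finset.sum_congr rfl fun L _ => ?_
      simp only [hP, hQ, Matrix.of_apply]
      by_cases h1 : L.1 ⊆ K.1 <;> by_cases h2 : I.1 ⊆ L.1 <;> simp [h1, h2]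
    have huK : ¬ ((Finset.univ : Finset (Fin n)) ⊆ K.1) := by
      intro h; exact K.2 (univ_subset_iff.1 h).symm.symm
    have e3 := hadd (fun L => (if I.1 ⊆ L ∧ L ⊆ K.1 then (-1:ℝ)^(L.card - I.1.card) else 0))
    rw [if_neg (fun h => huK h.2), zero_add] at e3
    have e2 : ∑ L ∈ Finset.univ, (if I.1 ⊆ L ∧ L ⊆ K.1 then (-1:ℝ)^(L.card - I.1.card) else 0)
        = if I.1 = K.1 then 1 else 0 := by
      rw [← Finset.sum_filter]
      exact lemDelta I.1 K.1
    rw [e1, e3, e2]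
    congr 1
    apply propext
    exact ⟨fun h => Subtype.ext h.symm, fun h => congrArg Subtype.val h.symm⟩
  have hunit : IsUnit P := by
    have hdet := congrArg Matrix.det factQ
    rw [Matrix.det_mul, Matrix.det_one] at hdet
    exact (Matrix.isUnit_iff_isUnit_det P).mpr (IsUnit.of_mul_eq_one _ hdet)
  -- main entry computation
  set c := mob w (Finset.univ : Finset (Fin n)) with hc
  set d := fun I : Idx n => mob w I.1 with hd
  have hM : (Matrix.of fun I J : Idx n => w (I.1 ∪ J.1)) = Pᵀ * A * P := by
    rw [hA]
    ext I J
    rw [Matrix.mul_apply, Matrix.of_apply]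
    have e1 : ∀ L : Idx n, (Pᵀ * (Matrix.diagonal d + c • Matrix.vecMulVec v v)) I L
        = P L I * d L + c * v L := by
      intro L
      rw [Matrix.mul_apply]
      have h1 : ∀ K : Idx n, Pᵀ I K * ((Matrix.diagonal d + c • Matrix.vecMulVec v v) K L)
          = (if K = L then P K I * d K else 0) + c * v L * (P K I * v K) := by
        intro K
        simp only [Matrix.transpose_apply, Matrix.add_apply, Matrix.diagonal_apply,
          Matrix.smul_apply, Matrix.vecMulVec_apply, smul_eq_mul]
        split_ifs <;> ring
      rw [Finset.sum_congr rfl (fun K _ => h1 K), Finset.sum_add_distrib,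
        Finset.sum_ite_eq' Finset.univ L, ← Finset.mul_sum]
      have : ∑ K : Idx n, P K I * v K = 1 := fact1 I
      rw [this, if_pos (Finset.mem_univ L), mul_one]
    rw [Finset.sum_congr rfl (fun L _ => by rw [e1 L])]
    have h2 : ∀ L : Idx n, (P L I * d L + c * v L) * P L J
        = (P L I * P L J * d L) + c * (P L J * v L) := by intro L; ring
    rw [Finset.sum_congr rfl (fun L _ => h2 L), Finset.sum_add_distrib, ← Finset.mul_sum]
    have h3 : ∑ L : Idx n, P L I * P L J * d L = w (I.1 ∪ J.1) - c := fact2 I J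
    have h4 : ∑ L : Idx n, P L J * v L = 1 := fact1 J
    rw [h3, h4]
    ring

  have hM' : Mnm1 w = Pᵀ * A * P := by
    exact hM
  have hQP : Q * P = 1 := mul_eq_one_comm.mp factQ
  refine ⟨⟨P, hunit, hM'⟩, ?_⟩
  have hAeq : A = Qᵀ * Mnm1 w * Q := by
    rw [hM']
    have : Qᵀ * (Pᵀ * A * P) * Q = (P * Q)ᵀ * A * (P * Q) := by
      rw [Matrix.transpose_mul]
      simp only [Matrix.mul_assoc]
    rw [this, factQ]
    simp
  constructor
  · intro h
    have h2 := h.conjTranspose_mul_mul_same Q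
    rw [Matrix.conjTranspose_eq_transpose_of_trivial] at h2
    rw [hAeq]
    exact h2
  · intro h
    have h2 := h.conjTranspose_mul_mul_same P
    rw [Matrix.conjTranspose_eq_transpose_of_trivial] at h2
    rw [hM']
    exact h2
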